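/- Let f : ℝ → ℝ with f ∈ C^α(x_0) for some 0 < α < 1 (i.e., |f(x) - f(x_0)| ≤ C|x - x_0|^α near x_0), and let Ω = {(x,y) : y ≤ f(x)} be the domain below the graph of f. Then X_0 = (x_0, f(x_0)) is strongly (1/α - 1)-accessible in both Ω and its complement: there exist c > 0 and r_0 > 0 such that for all r ≤ r_0, meas(Ω ∩ B(X_0, r)) ≥ c·r^{1/α + 1} and meas(Ω^c ∩ B(X_0, r)) ≥ c·r^{1/α + 1}. -/

import Mathlib

open Real MeasureTheory

theorem strong_accessible_of_pointwise_holder (α : ℝ) (hα : 0 < α) (hα1 : α < 1)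
    (f : ℝ → ℝ) (x₀ : ℝ)
    (hf : ∃ C > 0, ∃ δ > 0, ∀ x : ℝ, |x - x₀| < δ → |f x - f x₀| ≤ C * |x - x₀| ^ α) :
    ∃ c > 0, ∃ r₀ > 0, ∀ r : ℝ, 0 < r → r ≤ r₀ →
      ENNReal.ofReal (c * r ^ (1/α + 1)) ≤
        volume ({p : ℝ × ℝ | p.2 ≤ f p.1} ∩ Metric.ball (x₀, f x₀) r) ∧
      ENNReal.ofReal (c * r ^ (1/α + 1)) ≤
        volume ({p : ℝ × ℝ | p.2 ≤ f p.1}ᶜ ∩ Metric.ball (x₀, f x₀) r) := by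
  obtain ⟨C, hC, δ, hδ, hfC⟩ := hf
  set y₀ := f x₀ with hy₀
  have h4C : (0:ℝ) < 4 * C := by linarith
  set K : ℝ := (4 * C) ^ (-(1/α)) with hK
  have hKpos : 0 < K := Real.rpow_pos_of_pos h4C _
  set p : ℝ := 1/α - 1 with hp
  have hppos : 0 < p := by
    have h1 : 1 < 1/α := by rw [lt_div_iff₀ hα]; linarith
    rw [hp]; linarith
  refine ⟨K/3, by positivity, min ((1/(2*K)) ^ p⁻¹) δ, lt_min (Real.rpow_pos_of_pos (by positivity) _) hδ, ?_⟩
  intro r hr hrr₀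
  set w : ℝ := K * r ^ (1/α) with hw
  have hwpos : 0 < w := mul_pos hKpos (Real.rpow_pos_of_pos hr _)
  have hrpow_split : r ^ (1/α) = r ^ p * r := by
    rw [show (1/α : ℝ) = p + 1 by rw [hp]; ring, Real.rpow_add_one hr.ne']
  have hw2 : w ≤ r / 2 := by
    have h1 : r ^ p ≤ ((1/(2*K)) ^ p⁻¹) ^ p :=
      Real.rpow_le_rpow hr.le (le_trans hrr₀ (min_le_left _ _)) hppos.le
    have h2 : ((1/(2*K)) ^ p⁻¹) ^ p = 1/(2*K) :=
      Real.rpow_inv_rpow (by positivity) hppos.ne'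
    rw [h2] at h1
    have : K * r ^ p ≤ 1/2 := by
      calc K * r ^ p ≤ K * (1/(2*K)) := by
            exact mul_le_mul_of_nonneg_left h1 hKpos.le
        _ = 1/2 := by field_simp
    calc w = (K * r ^ p) * r := by rw [hw, hrpow_split]; ring
      _ ≤ (1/2) * r := mul_le_mul_of_nonneg_right this hr.le
      _ = r / 2 := by ring
  have hrδ : r ≤ δ := le_trans hrr₀ (min_le_right _ _)
  have hwδ : w < δ := lt_of_le_of_lt hw2 (by linarith)
  have hwα : C * w ^ α = r / 4 := by
    have : w ^ α = (4*C)⁻¹ * r := by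
      rw [hw, Real.mul_rpow hKpos.le (Real.rpow_pos_of_pos hr _).le, hK]
      rw [← Real.rpow_mul h4C.le, ← Real.rpow_mul hr.le]
      have hαne : α ≠ 0 := hα.ne'
      rw [show -(1/α) * α = -1 by field_simp, show 1/α * α = 1 by field_simp,
        Real.rpow_neg_one, Real.rpow_one]
    rw [this]; field_simp
  have hfx : ∀ x : ℝ, |x - x₀| < w → |f x - y₀| ≤ r / 4 := by
    intro x hx
    calc |f x - y₀| ≤ C * |x - x₀| ^ α := hfC x (lt_trans hx hwδ)
      _ ≤ C * w ^ α := by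
          exact mul_le_mul_of_nonneg_left
            (Real.rpow_le_rpow (abs_nonneg _) hx.le hα.le) hC.le
      _ = r / 4 := hwα
  have hball : Metric.ball ((x₀, y₀) : ℝ × ℝ) r = Metric.ball x₀ r ×ˢ Metric.ball y₀ r :=
    (ball_prod_same x₀ y₀ r).symm
  have hpow : (K/3) * r ^ (1/α + 1) = (2 * w) * (r/6) := by
    rw [Real.rpow_add hr, Real.rpow_one, hw, hrpow_split]; ring
  have hvol : ∀ a b : ℝ, volume ((Set.Ioo (x₀ - w) (x₀ + w)) ×ˢ (Set.Ioo a b))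
      = ENNReal.ofReal (2*w) * ENNReal.ofReal (b - a) := by
    intro a b
    rw [Measure.volume_eq_prod, Measure.prod_prod, Real.volume_Ioo, Real.volume_Ioo]
    congr 1; ring_nf
  constructor
  · calc ENNReal.ofReal (K/3 * r ^ (1/α + 1))
        = volume ((Set.Ioo (x₀ - w) (x₀ + w)) ×ˢ (Set.Ioo (y₀ - r/2) (y₀ - r/3))) := by
          rw [hvol, ← ENNReal.ofReal_mul (by positivity), hpow]
          congr 1; ring
      _ ≤ _ := by
          apply measure_mono
          rintro ⟨x, y⟩ ⟨hx, hy⟩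
          simp only [Set.mem_Ioo] at hx hy
          have hxw : |x - x₀| < w := abs_lt.mpr ⟨by linarith [hx.1], by linarith [hx.2]⟩
          have hfb := hfx x hxw
          constructor
          · have : |f x - y₀| ≤ r/4 := hfb
            have := abs_le.mp this
            show y ≤ f x
            nlinarith [hy.2, this.1, hr]
          · rw [hball]
            constructor
            · rw [Metric.mem_ball, Real.dist_eq]; linarith [hxw, hw2, hr]
            · rw [Metric.mem_ball, Real.dist_eq]
              rw [abs_lt]; constructor <;> linarith [hy.1, hy.2, hr]
  · calc ENNReal.ofReal (K/3 * r ^ (1/α + 1))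
        = volume ((Set.Ioo (x₀ - w) (x₀ + w)) ×ˢ (Set.Ioo (y₀ + r/3) (y₀ + r/2))) := by
          rw [hvol, ← ENNReal.ofReal_mul (by positivity), hpow]
          congr 1; ring
      _ ≤ _ := by
          apply measure_mono
          rintro ⟨x, y⟩ ⟨hx, hy⟩
          simp only [Set.mem_Ioo] at hx hy
          have hxw : |x - x₀| < w := abs_lt.mpr ⟨by linarith [hx.1], by linarith [hx.2]⟩
          have hfb := abs_le.mp (hfx x hxw)
          constructor
          · show ¬ (y ≤ f x)
            push_neg
            linarith [hy.1, hfb.2, hr]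
          · rw [hball]
            constructor
            · rw [Metric.mem_ball, Real.dist_eq]; linarith [hxw, hw2, hr]
            · rw [Metric.mem_ball, Real.dist_eq]
              rw [abs_lt]; constructor <;> linarith [hy.1, hy.2, hr]
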